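/- Let ν be a positive probability density on ℝ, (⌊r⌋+1)-times continuously differentiable with sup_t |ν^{(j)}(t)|/ν(t) < ∞ for j = 1,…,⌊r⌋+1, r ≥ 1 not an integer, V(x) = (1+|x|)^r, and P_{k,α}f(x) = (−1)^k x^k ∫ f(y)ν^{(k)}(y−αx)dy for k = 0,…,⌊r⌋. If β, β' ∈ [0,1] with β + k/r < β' ≤ 1, then α ↦ P_{k,α} is continuous from (−a₀,a₀) to L(B_β, B_{β'}); more precisely, with σ = r(β'−β) − k ∈ (0,1], ‖P_{k,α} − P_{k,α'}‖_{β,β'} ≤ 2AB|α−α'|^σ for all α,α' ∈ (−a₀,a₀), where A = max_{0≤j≤⌊r⌋+1} sup_t |ν^{(j)}(t)|/ν(t) and B satisfies P_α V^β ≤ B V^β uniformly in |α| ≤ a₀. -/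

import Mathlib

open MeasureTheory Set

/-- The formal derivative operators `P_{k,α} f(x) = (-1)^k x^k ∫ f(y) ν^{(k)}(y-αx) dy` of the
AR(1) transition operator. -/
noncomputable def arOpD (ν : ℝ → ℝ) (k : ℕ) (α : ℝ) (f : ℝ → ℝ) (x : ℝ) : ℝ :=
  (-1 : ℝ) ^ k * x ^ k * ∫ y, f y * iteratedDeriv k ν (y - α * x)

/-- Lemma 2.2 (i), quantitative form: Hölder continuity of `α ↦ P_{k,α}` from
`B_β` to `B_{β'}` when `β + k/r < β' ≤ 1`, with exponent `σ = r(β'-β) - k ∈ (0,1]`: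
`‖P_{k,α} - P_{k,α'}‖_{β,β'} ≤ 2AB|α-α'|^σ`. -/
theorem stmt15 (ν : ℝ → ℝ) (hpos : ∀ t, 0 < ν t)
    (hint : Integrable ν) (hmass : ∫ x, ν x = 1)
    (r : ℝ) (hr : 1 ≤ r) (hrnotint : ∀ n : ℕ, (n : ℝ) ≠ r)
    (hsmooth : ContDiff ℝ ((Nat.floor r + 1 : ℕ) : ℕ∞) ν)
    (A : ℝ) (hA : ∀ j ≤ Nat.floor r + 1, ∀ t, |iteratedDeriv j ν t| ≤ A * ν t)
    (a₀ : ℝ) (ha₀ : a₀ ∈ Set.Ioo (0 : ℝ) 1)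
    (β β' : ℝ) (hβ : 0 ≤ β) (k : ℕ) (hk : k ≤ Nat.floor r)
    (hββ' : β + (k : ℝ) / r < β') (hβ'1 : β' ≤ 1)
    (σ : ℝ) (hσdef : σ = r * (β' - β) - k) (hσ : σ ∈ Set.Ioc (0 : ℝ) 1)
    (B : ℝ)
    (hBint : ∀ α ∈ Set.Icc (-a₀) a₀, ∀ x : ℝ,
      Integrable (fun y => ((1 + |y|) ^ r) ^ β * ν (y - α * x)))
    (hB : ∀ α ∈ Set.Icc (-a₀) a₀, ∀ x : ℝ,
      (∫ y, ((1 + |y|) ^ r) ^ β * ν (y - α * x)) ≤ B * ((1 + |x|) ^ r) ^ β)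
    (f : ℝ → ℝ) (hfm : Measurable f) (F : ℝ) (hF : 0 ≤ F)
    (hf : ∀ y, |f y| ≤ F * ((1 + |y|) ^ r) ^ β)
    (α α' : ℝ) (hα : α ∈ Set.Ioo (-a₀) a₀) (hα' : α' ∈ Set.Ioo (-a₀) a₀) (x : ℝ) :
    |arOpD ν k α f x - arOpD ν k α' f x|
      ≤ 2 * A * B * |α - α'| ^ σ * F * ((1 + |x|) ^ r) ^ β' := by
  obtain ⟨hσ0, hσ1⟩ := hσ
  obtain ⟨ha₀0, ha₀1⟩ := ha₀
  -- basic positivity facts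
  have hA1 : 1 ≤ A := by
    have h := hA 0 (Nat.zero_le _) 0
    rw [iteratedDeriv_zero, abs_of_pos (hpos 0)] at h
    nlinarith [hpos 0]
  have hA0 : (0:ℝ) ≤ A := le_trans zero_le_one hA1
  have h0I : (0:ℝ) ∈ Icc (-a₀) a₀ := ⟨by linarith, by linarith⟩
  have hB0 : (0:ℝ) ≤ B := by
    have h := hB 0 h0I 0
    have hnn : (0:ℝ) ≤ ∫ y, ((1 + |y|) ^ r) ^ β * ν (y - 0 * 0) := by
      refine integral_nonneg fun y => ?_
      have : (0:ℝ) ≤ ((1 + |y|) ^ r) ^ β :=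
        Real.rpow_nonneg (Real.rpow_nonneg (by positivity) r) β
      exact mul_nonneg this (hpos _).le
    simpa using le_trans hnn h
  -- smoothness facts
  have hkN : (k:ℕ) + 1 ≤ Nat.floor r + 1 := by omega
  have hgc : Continuous (iteratedDeriv k ν) :=
    hsmooth.continuous_iteratedDeriv k (by exact_mod_cast (by omega : k ≤ Nat.floor r + 1))
  have hg'c : Continuous (iteratedDeriv (k+1) ν) :=
    hsmooth.continuous_iteratedDeriv (k+1) (by exact_mod_cast hkN)
  have hgd : ∀ u : ℝ, HasDerivAt (iteratedDeriv k ν) (iteratedDeriv (k+1) ν u) u := by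
    intro u
    have hdiff : Differentiable ℝ (iteratedDeriv k ν) :=
      hsmooth.differentiable_iteratedDeriv k (by exact_mod_cast (by omega : k < Nat.floor r + 1))
    have := (hdiff u).hasDerivAt
    rwa [← iteratedDeriv_succ] at this
  have hgA : ∀ t, |iteratedDeriv k ν t| ≤ A * ν t := fun t => hA k (by omega) t
  have hg'A : ∀ t, |iteratedDeriv (k+1) ν t| ≤ A * ν t := fun t => hA (k+1) hkN t
  -- Gronwall-type comparison for ν
  have hνd : Differentiable ℝ ν := by
    have h1 : ContDiff ℝ 1 ν := hsmooth.of_le (by exact_mod_cast (by omega : 1 ≤ Nat.floor r + 1))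
    exact h1.differentiable one_ne_zero
  have hν1 : ∀ t, |deriv ν t| ≤ A * ν t := by
    intro t
    have h := hA 1 (by omega) t
    rwa [iteratedDeriv_one] at h
  have gron : ∀ u v : ℝ, ν u ≤ ν v * Real.exp (A * |u - v|) := by
    intro u v
    have hL : ∀ w ∈ (univ : Set ℝ), HasDerivWithinAt (fun t => Real.log (ν t))
        (deriv ν w / ν w) univ w := fun w _ =>
      (((hνd w).hasDerivAt).log (hpos w).ne').hasDerivWithinAt
    have hb : ∀ w ∈ (univ : Set ℝ), ‖deriv ν w / ν w‖ ≤ A := by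
      intro w _
      rw [Real.norm_eq_abs, abs_div, abs_of_pos (hpos w), div_le_iff₀ (hpos w)]
      exact hν1 w
    have hmvt := convex_univ.norm_image_sub_le_of_norm_hasDerivWithin_le hL hb
      (mem_univ v) (mem_univ u)
    rw [Real.norm_eq_abs, Real.norm_eq_abs] at hmvt
    have h2 : Real.log (ν u) ≤ Real.log (ν v) + A * |u - v| := by
      have := le_abs_self (Real.log (ν u) - Real.log (ν v))
      linarith
    calc ν u = Real.exp (Real.log (ν u)) := (Real.exp_log (hpos u)).symm
      _ ≤ Real.exp (Real.log (ν v) + A * |u - v|) := Real.exp_le_exp.2 h2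
      _ = ν v * Real.exp (A * |u - v|) := by rw [Real.exp_add, Real.exp_log (hpos v)]
  -- core integrability and bound
  have core : ∀ (h : ℝ → ℝ), Continuous h → (∀ t, |h t| ≤ A * ν t) →
      ∀ a ∈ Icc (-a₀) a₀, Integrable (fun y => f y * h (y - a * x)) ∧
        |∫ y, f y * h (y - a * x)| ≤ A * F * (B * ((1 + |x|) ^ r) ^ β) := by
    intro h hc hb a ha
    have hmeas : AEStronglyMeasurable (fun y => f y * h (y - a * x)) volume :=
      hfm.aestronglyMeasurable.mul
        ((hc.comp (continuous_id.sub continuous_const)).aestronglyMeasurable)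
    have hVy : ∀ y : ℝ, (0:ℝ) ≤ ((1 + |y|) ^ r) ^ β := fun y =>
      Real.rpow_nonneg (Real.rpow_nonneg (by positivity) r) β
    have hbd : ∀ y, |f y| * |h (y - a * x)| ≤
        (A * F) * (((1 + |y|) ^ r) ^ β * ν (y - a * x)) := by
      intro y
      calc |f y| * |h (y - a * x)| ≤ (F * ((1 + |y|) ^ r) ^ β) * (A * ν (y - a * x)) :=
            mul_le_mul (hf y) (hb _) (abs_nonneg _) (mul_nonneg hF (hVy y))
        _ = (A * F) * (((1 + |y|) ^ r) ^ β * ν (y - a * x)) := by ring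
    have hint2 : Integrable (fun y => f y * h (y - a * x)) := by
      refine Integrable.mono ((hBint a ha x).const_mul (A * F)) hmeas ?_
      refine ae_of_all _ fun y => ?_
      rw [Real.norm_eq_abs, Real.norm_eq_abs, abs_mul]
      exact (hbd y).trans (le_abs_self _)
    refine ⟨hint2, ?_⟩
    calc |∫ y, f y * h (y - a * x)| ≤ ∫ y, |f y| * |h (y - a * x)| := by
          simpa [Real.norm_eq_abs] using
            norm_integral_le_integral_norm (μ := volume) (fun y => f y * h (y - a * x))
      _ ≤ ∫ y, (A * F) * (((1 + |y|) ^ r) ^ β * ν (y - a * x)) :=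
          integral_mono (by simpa [abs_mul] using hint2.abs)
            ((hBint a ha x).const_mul (A * F)) hbd
      _ = (A * F) * ∫ y, ((1 + |y|) ^ r) ^ β * ν (y - a * x) := integral_const_mul _ _
      _ ≤ (A * F) * (B * ((1 + |x|) ^ r) ^ β) :=
          mul_le_mul_of_nonneg_left (hB a ha x) (mul_nonneg hA0 hF)
  have hαI : α ∈ Icc (-a₀) a₀ := Ioo_subset_Icc_self hα
  have hα'I : α' ∈ Icc (-a₀) a₀ := Ioo_subset_Icc_self hα'
  -- the function Φ and its derivative
  set c : ℝ := 1 + |x| with hcdef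
  have hc1 : (1:ℝ) ≤ c := by simp [hcdef, abs_nonneg]
  have hc0 : (0:ℝ) < c := lt_of_lt_of_le one_pos hc1
  set Cst : ℝ := A * F * (B * (c ^ r) ^ β) with hCstdef
  have hCst : (0:ℝ) ≤ Cst :=
    mul_nonneg (mul_nonneg hA0 hF)
      (mul_nonneg hB0 (Real.rpow_nonneg (Real.rpow_nonneg hc0.le r) β))
  set Φ : ℝ → ℝ := fun t => ∫ y, f y * iteratedDeriv k ν (y - t * x) with hΦdef
  set Φ' : ℝ → ℝ := fun t => ∫ y, f y * (-x * iteratedDeriv (k+1) ν (y - t * x)) with hΦ'def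
  have hΦd : ∀ t₀ ∈ Icc (-a₀) a₀, HasDerivAt Φ (Φ' t₀) t₀ := by
    intro t₀ ht₀
    have key := hasDerivAt_integral_of_dominated_loc_of_deriv_le (μ := volume) (s := Metric.ball t₀ 1)
      (F := fun t y => f y * iteratedDeriv k ν (y - t * x))
      (F' := fun t y => f y * (-x * iteratedDeriv (k+1) ν (y - t * x)))
      (bound := fun y => (A * F * (|x| * Real.exp (A * |x|))) *
        (((1 + |y|) ^ r) ^ β * ν (y - t₀ * x)))
      (x₀ := t₀) (Metric.ball_mem_nhds t₀ one_pos)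
      (Filter.Eventually.of_forall fun t =>
        hfm.aestronglyMeasurable.mul
          ((hgc.comp (continuous_id.sub continuous_const)).aestronglyMeasurable))
      ((core _ hgc hgA t₀ ht₀).1)
      (hfm.aestronglyMeasurable.mul
        ((continuous_const.mul
          (hg'c.comp (continuous_id.sub continuous_const))).aestronglyMeasurable))
      (ae_of_all _ ?_) ((hBint t₀ ht₀ x).const_mul _) (ae_of_all _ ?_)
    · exact key.2
    · -- the bound
      intro y t ht
      have hb1 : ν (y - t * x) ≤ ν (y - t₀ * x) * Real.exp (A * |x|) := by
        have h1 := gron (y - t * x) (y - t₀ * x)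
        have h2 : |y - t * x - (y - t₀ * x)| ≤ |x| := by
          have he : y - t * x - (y - t₀ * x) = (t₀ - t) * x := by ring
          rw [he, abs_mul]
          have ht1 : |t₀ - t| ≤ 1 := by
            rw [abs_sub_comm]
            exact le_of_lt (by simpa [Real.dist_eq] using Metric.mem_ball.1 ht)
          nlinarith [abs_nonneg x]
        exact h1.trans (mul_le_mul_of_nonneg_left
          (Real.exp_le_exp.2 (mul_le_mul_of_nonneg_left h2 hA0)) (hpos _).le)
      have hVy : (0:ℝ) ≤ ((1 + |y|) ^ r) ^ β :=
        Real.rpow_nonneg (Real.rpow_nonneg (by positivity) r) β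
      have hFV : (0:ℝ) ≤ F * ((1 + |y|) ^ r) ^ β := mul_nonneg hF hVy
      rw [Real.norm_eq_abs, abs_mul, abs_mul, abs_neg]
      calc |f y| * (|x| * |iteratedDeriv (k+1) ν (y - t * x)|)
          ≤ (F * ((1 + |y|) ^ r) ^ β) * (|x| * (A * ν (y - t * x))) :=
            mul_le_mul (hf y) (mul_le_mul_of_nonneg_left (hg'A _) (abs_nonneg x))
              (mul_nonneg (abs_nonneg _) (abs_nonneg _)) hFV
        _ ≤ (F * ((1 + |y|) ^ r) ^ β) *
            (|x| * (A * (ν (y - t₀ * x) * Real.exp (A * |x|)))) :=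
            mul_le_mul_of_nonneg_left
              (mul_le_mul_of_nonneg_left (mul_le_mul_of_nonneg_left hb1 hA0) (abs_nonneg _)) hFV
        _ = (A * F * (|x| * Real.exp (A * |x|))) *
            (((1 + |y|) ^ r) ^ β * ν (y - t₀ * x)) := by ring
    · -- differentiability in t
      intro y t ht
      have h1 : HasDerivAt (fun s : ℝ => y - s * x) (-(1 * x)) t :=
        HasDerivAt.const_sub y ((hasDerivAt_id t).mul_const x)
      have h2 := ((hgd (y - t * x)).comp t h1).const_mul (f y)
      exact h2.congr_deriv (by ring)
  -- bound on Φ'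
  have hΦ'b : ∀ t ∈ Icc (-a₀) a₀, |Φ' t| ≤ |x| * Cst := by
    intro t ht
    have heq : Φ' t = -x * ∫ y, f y * iteratedDeriv (k+1) ν (y - t * x) := by
      show (∫ y, f y * (-x * iteratedDeriv (k+1) ν (y - t * x)))
        = -x * ∫ y, f y * iteratedDeriv (k+1) ν (y - t * x)
      rw [show (fun y => f y * (-x * iteratedDeriv (k+1) ν (y - t * x)))
          = fun y => -x * (f y * iteratedDeriv (k+1) ν (y - t * x)) from
        funext fun y => by ring, integral_const_mul]
    rw [heq, abs_mul, abs_neg]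
    exact mul_le_mul_of_nonneg_left ((core _ hg'c hg'A t ht).2) (abs_nonneg x)
  -- Lipschitz bound
  have lip : |Φ α - Φ α'| ≤ (|x| * Cst) * |α - α'| := by
    have := (convex_Icc (-a₀) a₀).norm_image_sub_le_of_norm_hasDerivWithin_le
      (fun t ht => (hΦd t ht).hasDerivWithinAt)
      (fun t ht => by rw [Real.norm_eq_abs]; exact hΦ'b t ht) hα'I hαI
    simpa [Real.norm_eq_abs] using this
  -- crude bound
  have crude : |Φ α - Φ α'| ≤ 2 * Cst := by
    have h1 := (core _ hgc hgA α hαI).2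
    have h2 := (core _ hgc hgA α' hα'I).2
    calc |Φ α - Φ α'| ≤ |Φ α| + |Φ α'| := abs_sub _ _
      _ ≤ 2 * Cst := by rw [hΦdef]; simp only []; rw [hCstdef]; linarith
  -- reduce to estimates on Φ
  have hdiffeq : |arOpD ν k α f x - arOpD ν k α' f x| = |x| ^ k * |Φ α - Φ α'| := by
    unfold arOpD
    rw [show (-1:ℝ) ^ k * x ^ k * (∫ y, f y * iteratedDeriv k ν (y - α * x))
        - (-1:ℝ) ^ k * x ^ k * (∫ y, f y * iteratedDeriv k ν (y - α' * x))
        = (-1:ℝ) ^ k * x ^ k * (Φ α - Φ α') from by rw [hΦdef]; ring]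
    rw [abs_mul, abs_mul, abs_pow, abs_pow, abs_neg, abs_one, one_pow, one_mul]
  rw [hdiffeq]
  set d : ℝ := |α - α'| with hddef
  have hd0 : (0:ℝ) ≤ d := abs_nonneg _
  have hrβ' : r * β' = r * β + k + σ := by rw [hσdef]; ring
  have hV' : ((1 + |x|) ^ r) ^ β' = c ^ (r * β') := by
    rw [hcdef, ← Real.rpow_mul hc0.le]
  have hV : (c ^ r) ^ β = c ^ (r * β) := by rw [← Real.rpow_mul hc0.le]
  have hxk : |x| ^ k ≤ c ^ (k:ℝ) := by
    rw [Real.rpow_natCast]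
    exact pow_le_pow_left₀ (abs_nonneg x) (by rw [hcdef]; linarith) k
  have hck : (0:ℝ) ≤ c ^ (k:ℝ) := Real.rpow_nonneg hc0.le _
  rw [hV']
  rcases le_or_gt (d * c) 1 with hcase | hcase
  · -- Lipschitz case
    have ccc : c ^ ((k:ℝ) + r * β + 1) = c ^ (k:ℝ) * c ^ (r * β) * c := by
      rw [Real.rpow_add hc0, Real.rpow_add hc0, Real.rpow_one]
    have key : d * c ^ ((k:ℝ) + r * β + 1) ≤ d ^ σ * c ^ (r * β') := by
      rcases eq_or_lt_of_le hd0 with h0 | hdpos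
      · rw [← h0, Real.zero_rpow hσ0.ne', zero_mul, zero_mul]
      · have e1 : d = d ^ σ * d ^ (1 - σ) := by
          rw [← Real.rpow_add hdpos, show σ + (1 - σ) = 1 from by ring, Real.rpow_one]
        have e2 : c ^ ((k:ℝ) + r * β + 1) = c ^ (r * β') * c ^ (1 - σ) := by
          rw [← Real.rpow_add hc0]
          congr 1
          rw [hrβ']; ring
        have e3 : d ^ (1 - σ) * c ^ (1 - σ) ≤ 1 := by
          rw [← Real.mul_rpow hd0 hc0.le]
          exact Real.rpow_le_one (mul_nonneg hd0 hc0.le) hcase (by linarith)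
        have e4 : d * c ^ ((k:ℝ) + r * β + 1)
            = (d ^ σ * c ^ (r * β')) * (d ^ (1 - σ) * c ^ (1 - σ)) := by
          rw [e2]
          nth_rewrite 1 [e1]
          ring
        calc d * c ^ ((k:ℝ) + r * β + 1)
            = (d ^ σ * c ^ (r * β')) * (d ^ (1 - σ) * c ^ (1 - σ)) := e4
          _ ≤ (d ^ σ * c ^ (r * β')) * 1 :=
              mul_le_mul_of_nonneg_left e3
                (mul_nonneg (Real.rpow_nonneg hd0 _) (Real.rpow_nonneg hc0.le _))
          _ = d ^ σ * c ^ (r * β') := mul_one _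
    have hABF : (0:ℝ) ≤ A * B * F := mul_nonneg (mul_nonneg hA0 hB0) hF
    calc |x| ^ k * |Φ α - Φ α'|
        ≤ c ^ (k:ℝ) * ((c * Cst) * d) := by
          refine mul_le_mul hxk (lip.trans ?_) (abs_nonneg _) hck
          exact mul_le_mul_of_nonneg_right
            (mul_le_mul_of_nonneg_right (by rw [hcdef]; linarith [abs_nonneg x]) hCst) hd0
      _ = (A * B * F) * (d * c ^ ((k:ℝ) + r * β + 1)) := by
          rw [ccc, hCstdef, hV]; ring
      _ ≤ (A * B * F) * (d ^ σ * c ^ (r * β')) := mul_le_mul_of_nonneg_left key hABF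
      _ ≤ 2 * A * B * d ^ σ * F * c ^ (r * β') := by
          have h5 : (0:ℝ) ≤ (A * B * F) * (d ^ σ * c ^ (r * β')) :=
            mul_nonneg hABF (mul_nonneg (Real.rpow_nonneg hd0 _) (Real.rpow_nonneg hc0.le _))
          nlinarith [h5]
  · -- crude case
    have h1 : (1:ℝ) ≤ d ^ σ * c ^ σ := by
      rw [← Real.mul_rpow hd0 hc0.le]
      exact Real.one_le_rpow hcase.le hσ0.le
    have hcσ : c ^ σ * c ^ ((k:ℝ) + r * β) = c ^ (r * β') := by
      rw [← Real.rpow_add hc0]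
      congr 1
      rw [hrβ']; ring
    calc |x| ^ k * |Φ α - Φ α'|
        ≤ c ^ (k:ℝ) * (2 * Cst) := mul_le_mul hxk crude (abs_nonneg _) hck
      _ = 2 * A * B * F * (c ^ ((k:ℝ) + r * β)) := by
          rw [Real.rpow_add hc0, hCstdef, hV]; ring
      _ ≤ 2 * A * B * F * ((d ^ σ * c ^ σ) * c ^ ((k:ℝ) + r * β)) := by
          refine mul_le_mul_of_nonneg_left ?_
            (mul_nonneg (mul_nonneg (mul_nonneg (by norm_num) hA0) hB0) hF)
          exact le_mul_of_one_le_left (Real.rpow_nonneg hc0.le _) h1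
      _ = 2 * A * B * d ^ σ * F * c ^ (r * β') := by
          rw [← hcσ]; ring
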